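/- Let G₂, G_e, G₁₂, G₁e, G₂₂, G₂e be strictly positive real numbers satisfying G₂ ≥ G_e, G₂₂ ≥ G₂e, G₁₂·G_e ≥ G₁e·G₂, and G₁₂·G₂e ≥ G₁e·G₂₂. Fix ρ₂ ∈ [0, 1] and p > 0, and define u(ρ₁) = G₂ + √ρ₁·G₁₂ + √ρ₂·G₂₂ and v(ρ₁) = G_e + √ρ₁·G₁e + √ρ₂·G₂e. Then the secrecy sum-rate S(ρ₁) = (1/2)·log₂((1 + p·u(ρ₁)²)/(1 + p·v(ρ₁)²)) is monotone nondecreasing in ρ₁ on [0, 1]. -/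
import Mathlib

lemma secrecy_prod_ineq (us ut vs vt p : ℝ) (hp : 0 < p)
    (hA : vt ^ 2 - vs ^ 2 ≤ ut ^ 2 - us ^ 2)
    (hB : us ^ 2 * vt ^ 2 ≤ ut ^ 2 * vs ^ 2) :
    (1 + p * us ^ 2) * (1 + p * vt ^ 2) ≤ (1 + p * ut ^ 2) * (1 + p * vs ^ 2) := by
  nlinarith [mul_le_mul_of_nonneg_left hA hp.le,
    mul_le_mul_of_nonneg_left hB (mul_pos hp hp).le]

lemma secrecy_key (G2 Ge G12 G1e G22 G2e s t c p : ℝ)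
    (hG2 : 0 < G2) (hGe : 0 < Ge) (hG12 : 0 < G12) (hG1e : 0 < G1e)
    (hG22 : 0 < G22) (hG2e : 0 < G2e)
    (h1 : Ge ≤ G2) (h2 : G2e ≤ G22)
    (h3 : G1e * G2 ≤ G12 * Ge) (h4 : G1e * G22 ≤ G12 * G2e)
    (hs : 0 ≤ s) (hst : s ≤ t) (hc : 0 ≤ c) (hp : 0 < p) :
    (1 + p * (G2 + s * G12 + c * G22) ^ 2) * (1 + p * (Ge + t * G1e + c * G2e) ^ 2) ≤
    (1 + p * (G2 + t * G12 + c * G22) ^ 2) * (1 + p * (Ge + s * G1e + c * G2e) ^ 2) := by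
  have ht : 0 ≤ t := hs.trans hst
  have hus0 : (0:ℝ) < G2 + s * G12 + c * G22 := by positivity
  have hut0 : (0:ℝ) < G2 + t * G12 + c * G22 := by positivity
  have hvs0 : (0:ℝ) < Ge + s * G1e + c * G2e := by positivity
  have hvt0 : (0:ℝ) < Ge + t * G1e + c * G2e := by positivity
  have hG : G1e ≤ G12 := by nlinarith
  have hkey : G1e * (G2 + s * G12 + c * G22) ≤ G12 * (Ge + s * G1e + c * G2e) := by
    nlinarith [mul_nonneg hc (sub_nonneg.2 h4)]
  have hcross : (G2 + s * G12 + c * G22) * (Ge + t * G1e + c * G2e) ≤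
      (G2 + t * G12 + c * G22) * (Ge + s * G1e + c * G2e) := by
    nlinarith [mul_nonneg (sub_nonneg.2 hst) (sub_nonneg.2 hkey)]
  have huv_s : Ge + s * G1e + c * G2e ≤ G2 + s * G12 + c * G22 := by
    nlinarith [mul_nonneg hs (sub_nonneg.2 hG), mul_nonneg hc (sub_nonneg.2 h2)]
  have huv_t : Ge + t * G1e + c * G2e ≤ G2 + t * G12 + c * G22 := by
    nlinarith [mul_nonneg ht (sub_nonneg.2 hG), mul_nonneg hc (sub_nonneg.2 h2)]
  apply secrecy_prod_ineq _ _ _ _ _ hp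
  · have hsum : G1e * ((Ge + t * G1e + c * G2e) + (Ge + s * G1e + c * G2e)) ≤
        G12 * ((G2 + t * G12 + c * G22) + (G2 + s * G12 + c * G22)) :=
      mul_le_mul hG (add_le_add huv_t huv_s) (by positivity) hG12.le
    nlinarith [mul_le_mul_of_nonneg_left hsum (sub_nonneg.2 hst)]
  · have h0 : 0 ≤ (G2 + s * G12 + c * G22) * (Ge + t * G1e + c * G2e) := by positivity
    calc (G2 + s * G12 + c * G22) ^ 2 * (Ge + t * G1e + c * G2e) ^ 2
        = ((G2 + s * G12 + c * G22) * (Ge + t * G1e + c * G2e)) *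
          ((G2 + s * G12 + c * G22) * (Ge + t * G1e + c * G2e)) := by ring
      _ ≤ ((G2 + t * G12 + c * G22) * (Ge + s * G1e + c * G2e)) *
          ((G2 + t * G12 + c * G22) * (Ge + s * G1e + c * G2e)) :=
          mul_le_mul hcross hcross h0 (mul_nonneg hut0.le hvs0.le)
      _ = (G2 + t * G12 + c * G22) ^ 2 * (Ge + s * G1e + c * G2e) ^ 2 := by ring

/-- In the two-backscatter system, under the stated channel-amplitude
conditions the secrecy sum-rate
S(ρ₁) = (1/2)·log₂((1 + p·u(ρ₁)²)/(1 + p·v(ρ₁)²)) with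
u(ρ₁) = G₂ + √ρ₁·G₁₂ + √ρ₂·G₂₂ and v(ρ₁) = G_e + √ρ₁·G₁e + √ρ₂·G₂e is monotone
nondecreasing in ρ₁ on [0, 1]. -/
theorem secrecy_sum_rate_monotone_in_rho1 (G2 Ge G12 G1e G22 G2e ρ2 p : ℝ)
    (hG2 : 0 < G2) (hGe : 0 < Ge) (hG12 : 0 < G12) (hG1e : 0 < G1e)
    (hG22 : 0 < G22) (hG2e : 0 < G2e)
    (h1 : Ge ≤ G2) (h2 : G2e ≤ G22)
    (h3 : G1e * G2 ≤ G12 * Ge) (h4 : G1e * G22 ≤ G12 * G2e)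
    (hρ2 : ρ2 ∈ Set.Icc (0:ℝ) 1) (hp : 0 < p) :
    MonotoneOn (fun ρ1 : ℝ => (1/2) * Real.logb 2
      ((1 + p * (G2 + Real.sqrt ρ1 * G12 + Real.sqrt ρ2 * G22) ^ 2) /
       (1 + p * (Ge + Real.sqrt ρ1 * G1e + Real.sqrt ρ2 * G2e) ^ 2)))
      (Set.Icc 0 1) := by
  intro a ha b hb hab
  simp only
  have hc : (0:ℝ) ≤ Real.sqrt ρ2 := Real.sqrt_nonneg _
  have hs : (0:ℝ) ≤ Real.sqrt a := Real.sqrt_nonneg _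
  have hst : Real.sqrt a ≤ Real.sqrt b := Real.sqrt_le_sqrt hab
  have hden_a : (0:ℝ) < 1 + p * (Ge + Real.sqrt a * G1e + Real.sqrt ρ2 * G2e) ^ 2 := by positivity
  have hden_b : (0:ℝ) < 1 + p * (Ge + Real.sqrt b * G1e + Real.sqrt ρ2 * G2e) ^ 2 := by positivity
  have hnum_a : (0:ℝ) < 1 + p * (G2 + Real.sqrt a * G12 + Real.sqrt ρ2 * G22) ^ 2 := by positivity
  have hkey := secrecy_key G2 Ge G12 G1e G22 G2e (Real.sqrt a) (Real.sqrt b) (Real.sqrt ρ2) p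
    hG2 hGe hG12 hG1e hG22 hG2e h1 h2 h3 h4 hs hst hc hp
  have hdiv : (1 + p * (G2 + Real.sqrt a * G12 + Real.sqrt ρ2 * G22) ^ 2) /
       (1 + p * (Ge + Real.sqrt a * G1e + Real.sqrt ρ2 * G2e) ^ 2) ≤
      (1 + p * (G2 + Real.sqrt b * G12 + Real.sqrt ρ2 * G22) ^ 2) /
       (1 + p * (Ge + Real.sqrt b * G1e + Real.sqrt ρ2 * G2e) ^ 2) := by
    rw [div_le_div_iff₀ hden_a hden_b]
    linarith [hkey]
  have hlog := Real.logb_le_logb_of_le (b := 2) one_lt_two (by positivity) hdiv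
  linarith
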